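/- The affine span of the set {A, B, C, D} of 2×2 matrices, where A = [[1,1],[2,1]], B = [[−1,1],[2,−1]], C = (1/3)[[−1,1],[2,1]], D = (1/3)[[1,1],[2,−1]], has dimension 3, whereas the affine span of {[[1,1],[2,1]], [[1,1],[2,−1]], [[−1,1],[2,−1]], [[−1,1],[2,1]]} has dimension 2. -/

import Mathlib

open Module Submodule

private lemma span3_finrank {u v w : Matrix (Fin 2) (Fin 2) ℝ}
    (h : LinearIndependent ℝ ![u, v, w]) :
    finrank ℝ (span ℝ ({u, v, w} : Set (Matrix (Fin 2) (Fin 2) ℝ))) = 3 := by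
  have hs : ({u, v, w} : Set (Matrix (Fin 2) (Fin 2) ℝ)) = Set.range ![u, v, w] := by
    ext x; simp; tauto
  rw [hs, finrank_span_eq_card h, Fintype.card_fin]

private lemma span2_finrank {u v : Matrix (Fin 2) (Fin 2) ℝ}
    (h : LinearIndependent ℝ ![u, v]) :
    finrank ℝ (span ℝ ({u, v} : Set (Matrix (Fin 2) (Fin 2) ℝ))) = 2 := by
  have hs : ({u, v} : Set (Matrix (Fin 2) (Fin 2) ℝ)) = Set.range ![u, v] := by
    ext x; simp; tauto
  rw [hs, finrank_span_eq_card h, Fintype.card_fin]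

/-- The affine span of `{A, B, C, D}` (the Clarke Jacobian of `Ψ = Φ⁻¹` at 0)
has dimension 3, while the affine span of the Clarke Jacobian of `Φ` at 0
has dimension 2. -/
theorem affineSpan_dims :
    Module.finrank ℝ (affineSpan ℝ ({!![(1:ℝ),1;2,1], !![(-1:ℝ),1;2,-1],
        (1/3 : ℝ) • !![(-1:ℝ),1;2,1], (1/3 : ℝ) • !![(1:ℝ),1;2,-1]} :
        Set (Matrix (Fin 2) (Fin 2) ℝ))).direction = 3 ∧
    Module.finrank ℝ (affineSpan ℝ ({!![(1:ℝ),1;2,1], !![(1:ℝ),1;2,-1],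
        !![(-1:ℝ),1;2,-1], !![(-1:ℝ),1;2,1]} :
        Set (Matrix (Fin 2) (Fin 2) ℝ))).direction = 2 := by
  constructor
  · -- first set: dimension 3
    have hA : (!![(1:ℝ),1;2,1]) ∈ ({!![(1:ℝ),1;2,1], !![(-1:ℝ),1;2,-1],
        (1/3 : ℝ) • !![(-1:ℝ),1;2,1], (1/3 : ℝ) • !![(1:ℝ),1;2,-1]} :
        Set (Matrix (Fin 2) (Fin 2) ℝ)) := Set.mem_insert _ _
    rw [direction_affineSpan, vectorSpan_eq_span_vsub_set_right ℝ hA]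
    rw [Set.image_insert_eq, Set.image_insert_eq, Set.image_insert_eq, Set.image_singleton]
    rw [vsub_eq_sub, vsub_eq_sub, vsub_eq_sub, vsub_eq_sub]
    rw [show !![(1:ℝ),1;2,1] - !![(1:ℝ),1;2,1] = 0 from sub_self _, Submodule.span_insert_zero]
    have e1 : !![(-1:ℝ),1;2,-1] - !![(1:ℝ),1;2,1] = !![(-2:ℝ),0;0,-2] := by
      rw [← Matrix.ext_iff]; intro i j; fin_cases i <;> fin_cases j <;> norm_num
    have e2 : (1/3 : ℝ) • !![(-1:ℝ),1;2,1] - !![(1:ℝ),1;2,1]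
        = !![(-4/3:ℝ),-2/3;-4/3,-2/3] := by
      rw [← Matrix.ext_iff]; intro i j
      fin_cases i <;> fin_cases j <;> norm_num [Matrix.smul_apply]
    have e3 : (1/3 : ℝ) • !![(1:ℝ),1;2,-1] - !![(1:ℝ),1;2,1]
        = !![(-2/3:ℝ),-2/3;-4/3,-4/3] := by
      rw [← Matrix.ext_iff]; intro i j
      fin_cases i <;> fin_cases j <;> norm_num [Matrix.smul_apply]
    rw [e1, e2, e3]
    apply span3_finrank
    refine Fintype.linearIndependent_iff.2 fun g hg => ?_
    simp only [Fin.sum_univ_three, Matrix.cons_val_zero, Matrix.cons_val_one, Matrix.head_cons,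
      Matrix.cons_val_two, Matrix.tail_cons] at hg
    have e00 := congrFun (congrFun hg 0) 0
    have e01 := congrFun (congrFun hg 0) 1
    have e10 := congrFun (congrFun hg 1) 0
    have e11 := congrFun (congrFun hg 1) 1
    simp [Matrix.add_apply, Matrix.smul_apply] at e00 e01 e10 e11
    intro i; fin_cases i <;> simp <;> linarith
  · -- second set: dimension 2
    have hA : (!![(1:ℝ),1;2,1]) ∈ ({!![(1:ℝ),1;2,1], !![(1:ℝ),1;2,-1],
        !![(-1:ℝ),1;2,-1], !![(-1:ℝ),1;2,1]} :
        Set (Matrix (Fin 2) (Fin 2) ℝ)) := Set.mem_insert _ _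
    rw [direction_affineSpan, vectorSpan_eq_span_vsub_set_right ℝ hA]
    rw [Set.image_insert_eq, Set.image_insert_eq, Set.image_insert_eq, Set.image_singleton]
    rw [vsub_eq_sub, vsub_eq_sub, vsub_eq_sub, vsub_eq_sub]
    rw [show !![(1:ℝ),1;2,1] - !![(1:ℝ),1;2,1] = 0 from sub_self _, Submodule.span_insert_zero]
    have e1 : !![(1:ℝ),1;2,-1] - !![(1:ℝ),1;2,1] = !![(0:ℝ),0;0,-2] := by
      rw [← Matrix.ext_iff]; intro i j; fin_cases i <;> fin_cases j <;> norm_num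
    have e2 : !![(-1:ℝ),1;2,-1] - !![(1:ℝ),1;2,1] = !![(-2:ℝ),0;0,-2] := by
      rw [← Matrix.ext_iff]; intro i j; fin_cases i <;> fin_cases j <;> norm_num
    have e3 : !![(-1:ℝ),1;2,1] - !![(1:ℝ),1;2,1] = !![(-2:ℝ),0;0,0] := by
      rw [← Matrix.ext_iff]; intro i j; fin_cases i <;> fin_cases j <;> norm_num
    rw [e1, e2, e3]
    have hspan : span ℝ ({!![(0:ℝ),0;0,-2], !![(-2:ℝ),0;0,-2], !![(-2:ℝ),0;0,0]} :
        Set (Matrix (Fin 2) (Fin 2) ℝ))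
        = span ℝ ({!![(0:ℝ),0;0,-2], !![(-2:ℝ),0;0,0]} :
        Set (Matrix (Fin 2) (Fin 2) ℝ)) := by
      apply le_antisymm
      · rw [span_le]
        rintro x (rfl | rfl | rfl)
        · exact subset_span (Set.mem_insert _ _)
        · have : (!![(-2:ℝ),0;0,-2]) = !![(0:ℝ),0;0,-2] + !![(-2:ℝ),0;0,0] := by
            rw [← Matrix.ext_iff]; intro i j; fin_cases i <;> fin_cases j <;> norm_num
          rw [this]
          exact add_mem (subset_span (Set.mem_insert _ _))
            (subset_span (Set.mem_insert_of_mem _ rfl))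
        · exact subset_span (Set.mem_insert_of_mem _ rfl)
      · apply span_mono
        rintro x (rfl | rfl)
        · exact Set.mem_insert _ _
        · exact Set.mem_insert_of_mem _ (Set.mem_insert_of_mem _ rfl)
    rw [hspan]
    apply span2_finrank
    refine Fintype.linearIndependent_iff.2 fun g hg => ?_
    simp only [Fin.sum_univ_two, Matrix.cons_val_zero, Matrix.cons_val_one,
      Matrix.head_cons] at hg
    have e00 := congrFun (congrFun hg 0) 0
    have e11 := congrFun (congrFun hg 1) 1
    simp [Matrix.add_apply, Matrix.smul_apply] at e00 e11
    intro i; fin_cases i <;> simp <;> linarith
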